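/- (Stability of framelet message passing) Suppose the update X^{(t)} = X^{(t−1)} + σ(Σ_{r=1}^K Σ_{l=1}^J W_{r,l} X^{(t−1)} Θ_r + W_{0,J} X^{(t−1)} Θ_0) has ‖Θ_r‖ ≤ C_r for all r, where σ is 1-Lipschitz with σ(0)=0 (e.g. entrywise ReLU). Then ‖X^{(t)} − X̃^{(t)}‖ ≤ C^t ‖X^{(0)} − X̃^{(0)}‖ with C = 1 + 4 C₁ √λ_max · max_{r=0,…,K} C_r, for any two input features X^{(0)}, X̃^{(0)} evolved under the same network. -/

import Mathlib

open Matrix BigOperators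

lemma stmt_15_geom : ∀ J : ℕ, ∑ l ∈ Finset.Icc 1 J, ((Real.sqrt 2)⁻¹) ^ (l + 1) ≤
    2 - 2 * ((Real.sqrt 2)⁻¹) ^ J := by
  have h2 : (0:ℝ) ≤ 2 := by norm_num
  have hs : Real.sqrt 2 ^ 2 = 2 := Real.sq_sqrt h2
  have hr0 : (0:ℝ) ≤ (Real.sqrt 2)⁻¹ := by positivity
  have hr34 : (Real.sqrt 2)⁻¹ ≤ 3 / 4 := by
    rw [inv_le_comm₀ (by positivity) (by norm_num)]
    nlinarith [Real.sq_sqrt h2, Real.sqrt_nonneg 2]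
  set r := (Real.sqrt 2)⁻¹ with hr
  have hr2 : r ^ 2 = 1 / 2 := by
    rw [hr, inv_pow, hs]; norm_num
  intro J
  induction J with
  | zero => simp
  | succ n ih =>
    rw [Finset.sum_Icc_succ_top (by omega)]
    have hpn : (0:ℝ) ≤ r ^ n := pow_nonneg hr0 n
    have e1 : r ^ (n + 1 + 1) = r ^ n * r ^ 2 := by ring
    have e2 : r ^ (n + 1) = r ^ n * r := by ring
    nlinarith [hpn, hr2, hr34, ih]

/-- Stability of framelet message passing: for the update
`X^{(t)} = X^{(t−1)} + σ(Σ_{r,l} W_{r,l} X^{(t−1)} Θ_r + W_{0,J} X^{(t−1)} Θ_0)`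
with `‖Θ_r‖ ≤ C_r`, `σ` 1-Lipschitz with `σ(0) = 0`, and the framelet operator
bounds `‖Σ_r W_{r,l} Y Θ_r‖ ≤ C₁ C_m √λ_max 2^{−(l+1)/2} ‖Y‖` and
`‖W_{0,J} Y Θ_0‖ ≤ C₁ C_m √λ_max ‖Y‖`, two trajectories satisfy
`‖X^{(t)} − X̃^{(t)}‖ ≤ C^t ‖X^{(0)} − X̃^{(0)}‖` with
`C = 1 + 4 C₁ √λ_max · max_r C_r`. -/
theorem stmt_15 (N d K J : ℕ) (hJ : 1 ≤ J)
    (nrm : Matrix (Fin N) (Fin d) ℝ → ℝ)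
    (hnrm : ∀ Y, nrm Y = Real.sqrt (∑ i, ∑ j, (Y i j) ^ 2))
    (W : Fin K → ℕ → Matrix (Fin N) (Fin N) ℝ) (W0 : Matrix (Fin N) (Fin N) ℝ)
    (Θ : Fin K → Matrix (Fin d) (Fin d) ℝ) (Θ0 : Matrix (Fin d) (Fin d) ℝ)
    (C : Fin K → ℝ) (C0 C1 lammax Cm : ℝ)
    (hΘ : ∀ r (Y : Matrix (Fin N) (Fin d) ℝ), nrm (Y * Θ r) ≤ C r * nrm Y)
    (hΘ0 : ∀ Y : Matrix (Fin N) (Fin d) ℝ, nrm (Y * Θ0) ≤ C0 * nrm Y)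
    (hCm : C0 ≤ Cm ∧ ∀ r, C r ≤ Cm)
    (hWhigh : ∀ l : ℕ, 1 ≤ l → ∀ Y : Matrix (Fin N) (Fin d) ℝ,
      nrm (∑ r, W r l * Y * Θ r) ≤
        C1 * Cm * Real.sqrt lammax / Real.sqrt (2 ^ (l + 1)) * nrm Y)
    (hWlow : ∀ Y : Matrix (Fin N) (Fin d) ℝ,
      nrm (W0 * Y * Θ0) ≤ C1 * Cm * Real.sqrt lammax * nrm Y)
    (σ : ℝ → ℝ) (hσ : LipschitzWith 1 σ) (hσ0 : σ 0 = 0)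
    (X Xt : ℕ → Matrix (Fin N) (Fin d) ℝ)
    (hrecX : ∀ t, X (t + 1) = X t + Matrix.of (fun i j =>
      σ (((∑ r, ∑ l ∈ Finset.Icc 1 J, W r l * X t * Θ r) + W0 * X t * Θ0) i j)))
    (hrecXt : ∀ t, Xt (t + 1) = Xt t + Matrix.of (fun i j =>
      σ (((∑ r, ∑ l ∈ Finset.Icc 1 J, W r l * Xt t * Θ r) + W0 * Xt t * Θ0) i j))) :
    ∀ t : ℕ, nrm (X t - Xt t) ≤
      (1 + 4 * C1 * Real.sqrt lammax * Cm) ^ t * nrm (X 0 - Xt 0) := by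
  -- Transfer nrm to the Euclidean norm
  set E : Matrix (Fin N) (Fin d) ℝ → EuclideanSpace ℝ (Fin N × Fin d) :=
    fun Y => WithLp.toLp 2 (fun p : Fin N × Fin d => Y p.1 p.2) with hE
  have hEnorm : ∀ Y, nrm Y = ‖E Y‖ := by
    intro Y
    rw [hnrm, EuclideanSpace.norm_eq]
    congr 1
    rw [Fintype.sum_prod_type]
    simp [hE, Real.norm_eq_abs, sq_abs]
  have nrm_nonneg : ∀ Y, 0 ≤ nrm Y := fun Y => by rw [hEnorm]; positivity
  have hEadd : ∀ Y Z, E (Y + Z) = E Y + E Z := fun Y Z => rfl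
  have nrm_tri : ∀ Y Z, nrm (Y + Z) ≤ nrm Y + nrm Z := by
    intro Y Z
    rw [hEnorm, hEnorm, hEnorm, hEadd]
    exact norm_add_le _ _
  have nrm_sum : ∀ (s : Finset ℕ) (f : ℕ → Matrix (Fin N) (Fin d) ℝ),
      nrm (∑ l ∈ s, f l) ≤ ∑ l ∈ s, nrm (f l) := by
    intro s f
    have hEsum : E (∑ l ∈ s, f l) = ∑ l ∈ s, E (f l) := by
      induction s using Finset.induction with
      | empty => simp; rfl
      | insert _ _ h ih =>
        rw [Finset.sum_insert h, Finset.sum_insert h, hEadd, ih]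
    rw [hEnorm, hEsum]
    calc ‖∑ l ∈ s, E (f l)‖ ≤ ∑ l ∈ s, ‖E (f l)‖ := norm_sum_le _ _
      _ = ∑ l ∈ s, nrm (f l) := by simp_rw [hEnorm]
  -- σ applied entrywise is 1-Lipschitz for nrm
  have nrm_sigma : ∀ A B : Matrix (Fin N) (Fin d) ℝ,
      nrm (Matrix.of (fun i j => σ (A i j)) - Matrix.of (fun i j => σ (B i j))) ≤
        nrm (A - B) := by
    intro A B
    rw [hnrm, hnrm]
    apply Real.sqrt_le_sqrt
    apply Finset.sum_le_sum
    intro i _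
    apply Finset.sum_le_sum
    intro j _
    have habs : |σ (A i j) - σ (B i j)| ≤ |A i j - B i j| := by
      have := hσ.dist_le_mul (A i j) (B i j)
      simpa [Real.dist_eq] using this
    calc ((Matrix.of (fun i j => σ (A i j)) - Matrix.of (fun i j => σ (B i j))) i j) ^ 2
        = (σ (A i j) - σ (B i j)) ^ 2 := by simp [Matrix.sub_apply]
      _ ≤ (A i j - B i j) ^ 2 := by
          rw [← sq_abs, ← sq_abs (A i j - B i j)]
          exact pow_le_pow_left₀ (abs_nonneg _) habs 2
      _ = ((A - B) i j) ^ 2 := by simp [Matrix.sub_apply]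
  set c : ℝ := C1 * Cm * Real.sqrt lammax with hc
  by_cases hcpos : 0 ≤ c
  · -- main case
    -- per-step contraction
    have step : ∀ t, nrm (X (t + 1) - Xt (t + 1)) ≤
        (1 + 4 * C1 * Real.sqrt lammax * Cm) * nrm (X t - Xt t) := by
      intro t
      set A := (∑ r, ∑ l ∈ Finset.Icc 1 J, W r l * X t * Θ r) + W0 * X t * Θ0 with hA
      set B := (∑ r, ∑ l ∈ Finset.Icc 1 J, W r l * Xt t * Θ r) + W0 * Xt t * Θ0 with hB
      set D := X t - Xt t with hD
      have hdiff : X (t + 1) - Xt (t + 1) =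
          D + (Matrix.of (fun i j => σ (A i j)) - Matrix.of (fun i j => σ (B i j))) := by
        rw [hrecX, hrecXt, hD]
        abel
      have hAB : A - B = (∑ l ∈ Finset.Icc 1 J, ∑ r, W r l * D * Θ r) + W0 * D * Θ0 := by
        rw [hA, hB, hD,
          show (∑ l ∈ Finset.Icc 1 J, ∑ r : Fin K, W r l * (X t - Xt t) * Θ r) =
            ∑ r : Fin K, ∑ l ∈ Finset.Icc 1 J, W r l * (X t - Xt t) * Θ r from
            Finset.sum_comm]
        simp only [Matrix.mul_sub, Matrix.sub_mul, Finset.sum_sub_distrib]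
        abel
      have hsum : nrm (A - B) ≤ 3 * c * nrm D := by
        rw [hAB]
        have h1 : nrm ((∑ l ∈ Finset.Icc 1 J, ∑ r, W r l * D * Θ r) + W0 * D * Θ0) ≤
            (∑ l ∈ Finset.Icc 1 J, nrm (∑ r, W r l * D * Θ r)) + nrm (W0 * D * Θ0) := by
          calc nrm ((∑ l ∈ Finset.Icc 1 J, ∑ r, W r l * D * Θ r) + W0 * D * Θ0)
              ≤ nrm (∑ l ∈ Finset.Icc 1 J, ∑ r, W r l * D * Θ r) + nrm (W0 * D * Θ0) :=
                nrm_tri _ _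
            _ ≤ _ := by
                gcongr
                exact nrm_sum _ _
        have h2 : (∑ l ∈ Finset.Icc 1 J, nrm (∑ r, W r l * D * Θ r)) ≤
            ∑ l ∈ Finset.Icc 1 J, c * ((Real.sqrt 2)⁻¹) ^ (l + 1) * nrm D := by
          apply Finset.sum_le_sum
          intro l hl
          have hl1 : 1 ≤ l := (Finset.mem_Icc.mp hl).1
          have := hWhigh l hl1 D
          have hsq : Real.sqrt ((2:ℝ) ^ (l + 1)) = Real.sqrt 2 ^ (l + 1) :=
            calc Real.sqrt ((2:ℝ) ^ (l + 1))
                = Real.sqrt ((Real.sqrt 2 ^ (l + 1)) ^ 2) := by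
                  congr 1
                  rw [← pow_mul, mul_comm, pow_mul, Real.sq_sqrt (by norm_num : (0:ℝ) ≤ 2)]
              _ = Real.sqrt 2 ^ (l + 1) := Real.sqrt_sq (by positivity)
          rw [hsq] at this
          calc nrm (∑ r, W r l * D * Θ r) ≤
              C1 * Cm * Real.sqrt lammax / Real.sqrt 2 ^ (l + 1) * nrm D := this
            _ = c * ((Real.sqrt 2)⁻¹) ^ (l + 1) * nrm D := by
                rw [hc, div_eq_mul_inv, inv_pow]
        have h3 : ∑ l ∈ Finset.Icc 1 J, c * ((Real.sqrt 2)⁻¹) ^ (l + 1) * nrm D ≤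
            2 * c * nrm D := by
          rw [show (∑ l ∈ Finset.Icc 1 J, c * ((Real.sqrt 2)⁻¹) ^ (l + 1) * nrm D) =
              (∑ l ∈ Finset.Icc 1 J, ((Real.sqrt 2)⁻¹) ^ (l + 1)) * (c * nrm D) by
            rw [Finset.sum_mul]; apply Finset.sum_congr rfl; intro l _; ring]
          have hg := stmt_15_geom J
          have hcD : 0 ≤ c * nrm D := mul_nonneg hcpos (nrm_nonneg D)
          have hgle : (∑ l ∈ Finset.Icc 1 J, ((Real.sqrt 2)⁻¹) ^ (l + 1)) ≤ 2 := by
            have : 0 ≤ 2 * ((Real.sqrt 2)⁻¹) ^ J := by positivity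
            linarith
          nlinarith [hgle, hcD]
        have h4 := hWlow D
        calc nrm ((∑ l ∈ Finset.Icc 1 J, ∑ r, W r l * D * Θ r) + W0 * D * Θ0)
            ≤ (∑ l ∈ Finset.Icc 1 J, nrm (∑ r, W r l * D * Θ r)) + nrm (W0 * D * Θ0) := h1
          _ ≤ 2 * c * nrm D + c * nrm D := by
              apply add_le_add (le_trans h2 h3)
              rw [hc]; exact h4
          _ = 3 * c * nrm D := by ring
      calc nrm (X (t + 1) - Xt (t + 1))
          ≤ nrm D + nrm (Matrix.of (fun i j => σ (A i j)) -
              Matrix.of (fun i j => σ (B i j))) := by rw [hdiff]; exact nrm_tri _ _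
        _ ≤ nrm D + nrm (A - B) := by gcongr; exact nrm_sigma A B
        _ ≤ nrm D + 3 * c * nrm D := by linarith [hsum]
        _ ≤ (1 + 4 * C1 * Real.sqrt lammax * Cm) * nrm D := by
            have hcD : 0 ≤ c * nrm D := mul_nonneg hcpos (nrm_nonneg D)
            have : 4 * C1 * Real.sqrt lammax * Cm * nrm D = 4 * (c * nrm D) := by
              rw [hc]; ring
            nlinarith [hcD]
    intro t
    induction t with
    | zero => simp
    | succ n ih =>
      have hC0 : (0:ℝ) ≤ 1 + 4 * C1 * Real.sqrt lammax * Cm := by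
        have : 4 * C1 * Real.sqrt lammax * Cm = 4 * c := by rw [hc]; ring
        linarith [hcpos]
      calc nrm (X (n + 1) - Xt (n + 1))
          ≤ (1 + 4 * C1 * Real.sqrt lammax * Cm) * nrm (X n - Xt n) := step n
        _ ≤ (1 + 4 * C1 * Real.sqrt lammax * Cm) *
            ((1 + 4 * C1 * Real.sqrt lammax * Cm) ^ n * nrm (X 0 - Xt 0)) := by
            exact mul_le_mul_of_nonneg_left ih hC0
        _ = (1 + 4 * C1 * Real.sqrt lammax * Cm) ^ (n + 1) * nrm (X 0 - Xt 0) := by ring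
  · -- degenerate case: c < 0 forces nrm ≡ 0
    push_neg at hcpos
    have hz : ∀ Y, nrm Y = 0 := by
      intro Y
      have h1 := hWlow Y
      have h2 := nrm_nonneg (W0 * Y * Θ0)
      have h3 := nrm_nonneg Y
      nlinarith
    intro t
    rw [hz, hz]
    simp
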